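/- Let θ ∈ (0,1], α > 0, β ≥ 1, a ∈ (0,1] and b > 0 with b ≥ 1 − a. Let f(s) = 1 − (a·(1−s)^{−θ} + b)^{−1/θ} (the pgf of PF(θ,a,b)) and φ(u) = 1 − (α·u^{−θ} + β)^{−1/θ} for u > 0 (the Laplace transform of CPF(θ,α,β)). Then for all u > 0, f(φ(u)) = 1 − (aα·u^{−θ} + aβ + b)^{−1/θ}. Hence, if N ~ PF(θ,a,b) and Y_1, Y_2, … are iid ~ CPF(θ,α,β), all independent, then ∑_{k=1}^{N} Y_k ~ CPF(θ, aα, aβ + b). -/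

import Mathlib

/-- random sums. If `f` is the pgf of `PF(θ,a,b)` and `φ` the Laplace transform
of `CPF(θ,α,β)`, then `f(φ(u)) = 1 - (aα u^(-θ) + aβ + b)^(-1/θ)` for `u > 0`; hence a
`PF(θ,a,b)`-sum of iid `CPF(θ,α,β)` variables has law `CPF(θ, aα, aβ + b)`. -/
theorem pf_random_sum_cpf (θ α β a b : ℝ) (hθ : θ ∈ Set.Ioc (0:ℝ) 1)
    (hα : 0 < α) (hβ : 1 ≤ β) (ha : a ∈ Set.Ioc (0:ℝ) 1) (hb : 0 < b) (hab : 1 - a ≤ b)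
    (f φ : ℝ → ℝ)
    (hf : ∀ s ∈ Set.Ico (0:ℝ) 1, f s = 1 - (a * (1 - s) ^ (-θ) + b) ^ (-1/θ))
    (hφ : ∀ u : ℝ, 0 < u → φ u = 1 - (α * u ^ (-θ) + β) ^ (-1/θ)) :
    ∀ u : ℝ, 0 < u → f (φ u) = 1 - (a * α * u ^ (-θ) + (a * β + b)) ^ (-1/θ) := by
  intro u hu
  obtain ⟨hθ0, hθ1⟩ := hθ
  have hup : (0:ℝ) < u ^ (-θ) := Real.rpow_pos_of_pos hu _
  set x : ℝ := α * u ^ (-θ) + β with hx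
  have hx1 : (1:ℝ) ≤ x := le_add_of_nonneg_of_le (by positivity) hβ
  have hx0 : (0:ℝ) < x := lt_of_lt_of_le one_pos hx1
  have hxp : (0:ℝ) < x ^ (-1/θ) := Real.rpow_pos_of_pos hx0 _
  have hxle : x ^ (-1/θ) ≤ 1 := by
    rw [show (1:ℝ) = x ^ (0:ℝ) by simp]
    exact Real.rpow_le_rpow_of_exponent_le hx1 (by
      rw [neg_div]
      exact neg_nonpos_of_nonneg (by positivity))
  have hmem : φ u ∈ Set.Ico (0:ℝ) 1 := by
    rw [hφ u hu]
    constructor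
    · linarith
    · linarith
  rw [hf _ hmem, hφ u hu]
  have key : (1 - (1 - x ^ (-1/θ))) ^ (-θ) = x := by
    rw [sub_sub_cancel, ← Real.rpow_mul hx0.le]
    · norm_num
      rw [neg_div, neg_mul, neg_neg, one_div, inv_mul_cancel₀ (ne_of_gt hθ0), Real.rpow_one]
  rw [key]
  rw [hx]
  ring_nf
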